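/- arXiv:math/0609608 — 4 statements merged into one kernel-verified Lean document; each statement's English description precedes it below -/
import Mathlib

section
/- Let μ be a probability measure on M, let r ≥ 0 be real, let K ≥ 1 be a natural number, and set λ = (1 + r/K)^{−1} • (δ_1 + (r/K) • μ), a probability measure on M. Then for every measurable set X, λ^{*K}(X) ≤ (1 + r/K)^{−K} · e^{r} · e^{r(μ⋆−1)}(X). -/
open MeasureTheory
open scoped ENNReal

set_option linter.unusedSectionVars false

/-- n-fold convolution power, with `μ^{*0} = δ_1`. -/
noncomputable def mconvPow {M : Type*} [Monoid M] [MeasurableSpace M]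
    (μ : Measure M) : ℕ → Measure M
  | 0 => Measure.dirac 1
  | n + 1 => Measure.mconv (mconvPow μ n) μ

/-- The convolution exponential `e^{r(μ⋆−1)} = e^{−r} ∑ (r^n/n!) • μ^{*n}`. -/
noncomputable def convExp {M : Type*} [Monoid M] [MeasurableSpace M]
    (μ : Measure M) (r : ℝ) : Measure M :=
  ENNReal.ofReal (Real.exp (-r)) •
    Measure.sum fun n => ENNReal.ofReal (r ^ n / n.factorial) • mconvPow μ n

namespace ConvAux

lemma smul_prod' {α β : Type*} [MeasurableSpace α] [MeasurableSpace β]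
    (a : ℝ≥0∞) (μ : Measure α) (ν : Measure β) [SFinite ν] :
    (a • μ).prod ν = a • μ.prod ν := by
  ext s hs
  rw [Measure.smul_apply, Measure.prod_apply hs, Measure.prod_apply hs,
    lintegral_smul_measure, smul_eq_mul]

lemma prod_smul' {α β : Type*} [MeasurableSpace α] [MeasurableSpace β]
    (a : ℝ≥0∞) (μ : Measure α) (ν : Measure β) [SFinite ν] :
    μ.prod (a • ν) = a • μ.prod ν := by
  ext s hs
  rw [Measure.smul_apply, Measure.prod_apply hs, Measure.prod_apply hs, smul_eq_mul,
    ← lintegral_const_mul _ (measurable_measure_prodMk_left hs)]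
  simp

variable {M : Type*} [Monoid M] [MeasurableSpace M]

lemma smul_mconv (a : ℝ≥0∞) (μ ν : Measure M) [SFinite ν] :
    (a • μ).mconv ν = a • μ.mconv ν := by
  unfold Measure.mconv
  rw [smul_prod', Measure.map_smul]

lemma mconv_smul (μ : Measure M) (a : ℝ≥0∞) (ν : Measure M) [SFinite ν] :
    μ.mconv (a • ν) = a • μ.mconv ν := by
  unfold Measure.mconv
  rw [prod_smul', Measure.map_smul]

lemma sfinite_finset_sum {ι : Type*} (s : Finset ι) (μ : ι → Measure M)
    [∀ i, SFinite (μ i)] : SFinite (∑ i ∈ s, μ i) := by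
  classical
  induction s using Finset.induction_on with
  | empty => simpa using inferInstanceAs (SFinite (0 : Measure M))
  | insert _ _ h ih => rw [Finset.sum_insert h]; haveI := ih; infer_instance

variable [MeasurableMul₂ M]

lemma sum_mconv {ι : Type*} (s : Finset ι) (μ : ι → Measure M)
    [∀ i, SFinite (μ i)] (ν : Measure M) [SFinite ν] :
    (∑ i ∈ s, μ i).mconv ν = ∑ i ∈ s, (μ i).mconv ν := by
  classical
  induction s using Finset.induction_on with
  | empty => simp [Measure.mconv_zero]
  | @insert a s h ih =>
      haveI := sfinite_finset_sum s μ
      rw [Finset.sum_insert h, Finset.sum_insert h, Measure.add_mconv, ih]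

instance isProb_mconvPow (μ : Measure M) [IsProbabilityMeasure μ] (n : ℕ) :
    IsProbabilityMeasure (mconvPow μ n) := by
  induction n with
  | zero => exact inferInstanceAs (IsProbabilityMeasure (Measure.dirac (1 : M)))
  | succ n ih => exact Measure.probabilitymeasure_of_probabilitymeasures_mconv _ _

/-- Binomial expansion of the convolution power. -/
lemma mconvPow_expand (μ : Measure M) [IsProbabilityMeasure μ] (a c : ℝ≥0∞) (K : ℕ) :
    mconvPow (a • (Measure.dirac 1 + c • μ)) K
      = ∑ n ∈ Finset.range (K + 1),
          (a ^ K * (K.choose n : ℝ≥0∞) * c ^ n) • mconvPow μ n := by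
  induction K with
  | zero => simp [mconvPow]
  | succ K ih =>
      haveI := sfinite_finset_sum (Finset.range (K + 1))
        (fun n => (a ^ K * (K.choose n : ℝ≥0∞) * c ^ n) • mconvPow μ n)
      haveI : SFinite (Measure.dirac (1:M) + c • μ) := by infer_instance
      show (mconvPow (a • (Measure.dirac 1 + c • μ)) K).mconv _ = _
      rw [ih, mconv_smul, Measure.mconv_add, Measure.mconv_dirac_one, mconv_smul]
      rw [sum_mconv]
      have hsum : (∑ n ∈ Finset.range (K + 1),
            ((a ^ K * (K.choose n : ℝ≥0∞) * c ^ n) • mconvPow μ n).mconv μ)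
          = ∑ n ∈ Finset.range (K + 1),
            (a ^ K * (K.choose n : ℝ≥0∞) * c ^ n) • mconvPow μ (n + 1) := by
        refine Finset.sum_congr rfl fun n _ => ?_
        rw [smul_mconv]
        rfl
      rw [hsum]
      ext s hs
      simp only [Measure.smul_apply, Measure.add_apply, Measure.coe_finset_sum,
        Finset.sum_apply, smul_eq_mul]
      set f : ℕ → ℝ≥0∞ := fun n => mconvPow μ n s with hf
      -- scalar identity
      rw [Finset.sum_range_succ' (fun n => a ^ (K + 1) * ((K + 1).choose n : ℝ≥0∞) * c ^ n * f n) (K + 1)]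
      have hext : ∑ n ∈ Finset.range (K + 1), a ^ K * (K.choose n : ℝ≥0∞) * c ^ n * f n
          = ∑ i ∈ Finset.range K, a ^ K * (K.choose (i + 1) : ℝ≥0∞) * c ^ (i + 1) * f (i + 1)
            + a ^ K * 1 * 1 * f 0 := by
        rw [Finset.sum_range_succ' (fun n => a ^ K * (K.choose n : ℝ≥0∞) * c ^ n * f n) K]
        simp
      rw [hext]
      have hfix : ∀ x : ℕ, (mconvPow μ (x + 1)) s = f (x + 1) := fun _ => rfl
      simp only [hfix]
      rw [Finset.sum_range_succ
            (fun k => a ^ (K+1) * (((K+1).choose (k+1) : ℕ) : ℝ≥0∞) * c ^ (k+1) * f (k+1)) K,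
          Finset.sum_range_succ
            (fun x => a ^ K * ((K.choose x : ℕ) : ℝ≥0∞) * c ^ x * f (x+1)) K]
      have key : ∑ i ∈ Finset.range K,
            a ^ (K+1) * (((K+1).choose (i+1) : ℕ) : ℝ≥0∞) * c ^ (i+1) * f (i+1)
          = ∑ i ∈ Finset.range K,
            (a * (a ^ K * ((K.choose (i+1) : ℕ) : ℝ≥0∞) * c ^ (i+1) * f (i+1))
              + a * c * (a ^ K * ((K.choose i : ℕ) : ℝ≥0∞) * c ^ i * f (i+1))) := by
        refine Finset.sum_congr rfl fun i _ => ?_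
        rw [Nat.choose_succ_succ, Nat.cast_add]
        ring
      rw [key, Finset.sum_add_distrib, ← Finset.mul_sum, ← Finset.mul_sum]
      simp only [Nat.choose_self, Nat.choose_zero_right, Nat.cast_one, pow_zero]
      ring

end ConvAux

theorem stmt6 {M : Type*} [CommMonoid M] [MeasurableSpace M] [MeasurableMul₂ M]
    (μ : Measure M) [IsProbabilityMeasure μ]
    (r : ℝ) (hr : 0 ≤ r) (K : ℕ) (hK : 1 ≤ K) :
    ∀ X : Set M, MeasurableSet X →
      mconvPow ((ENNReal.ofReal (1 + r / K))⁻¹ •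
          (Measure.dirac (1 : M) + ENNReal.ofReal (r / K) • μ)) K X ≤
        ENNReal.ofReal ((1 + r / K) ^ K)⁻¹ * ENNReal.ofReal (Real.exp r) *
          convExp μ r X := by
  intro X hX
  have hK0 : (0 : ℝ) < K := by exact_mod_cast hK
  have hKne : (K : ℝ) ≠ 0 := hK0.ne'
  have hc0 : (0 : ℝ) ≤ r / K := div_nonneg hr hK0.le
  have h1c : (0 : ℝ) ≤ 1 + r / K := by linarith
  set a : ℝ≥0∞ := (ENNReal.ofReal (1 + r / K))⁻¹ with ha
  set c : ℝ≥0∞ := ENNReal.ofReal (r / K) with hc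
  set f : ℕ → ℝ≥0∞ := fun n => mconvPow μ n X with hf
  have hconv : convExp μ r X
      = ENNReal.ofReal (Real.exp (-r)) *
        ∑' n, ENNReal.ofReal (r ^ n / n.factorial) * f n := by
    rw [convExp, Measure.smul_apply, smul_eq_mul, Measure.sum_apply _ hX]
    simp only [Measure.smul_apply, smul_eq_mul, hf]
  have heq : ENNReal.ofReal (Real.exp r) * ENNReal.ofReal (Real.exp (-r)) = 1 := by
    rw [← ENNReal.ofReal_mul (Real.exp_pos r).le, ← Real.exp_add]
    simp
  have hrhs : ENNReal.ofReal ((1 + r / K) ^ K)⁻¹ * ENNReal.ofReal (Real.exp r) *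
        convExp μ r X
      = ENNReal.ofReal ((1 + r / K) ^ K)⁻¹ *
        ∑' n, ENNReal.ofReal (r ^ n / n.factorial) * f n := by
    rw [hconv]
    calc ENNReal.ofReal ((1 + r / K) ^ K)⁻¹ * ENNReal.ofReal (Real.exp r) *
          (ENNReal.ofReal (Real.exp (-r)) *
            ∑' n, ENNReal.ofReal (r ^ n / n.factorial) * f n)
        = ENNReal.ofReal (Real.exp r) * ENNReal.ofReal (Real.exp (-r)) *
          (ENNReal.ofReal ((1 + r / K) ^ K)⁻¹ *
            ∑' n, ENNReal.ofReal (r ^ n / n.factorial) * f n) := by ring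
      _ = _ := by rw [heq, one_mul]
  rw [hrhs, ConvAux.mconvPow_expand μ a c K, Measure.finset_sum_apply]
  have haK : a ^ K = ENNReal.ofReal ((1 + r / K) ^ K)⁻¹ := by
    rw [ha, ← ENNReal.inv_pow, ← ENNReal.ofReal_pow h1c, ← ENNReal.ofReal_inv_of_pos]
    positivity
  have hterm : ∀ n : ℕ, ((K.choose n : ℕ) : ℝ≥0∞) * c ^ n
      ≤ ENNReal.ofReal (r ^ n / n.factorial) := by
    intro n
    rw [hc, ← ENNReal.ofReal_pow hc0, ← ENNReal.ofReal_natCast,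
      ← ENNReal.ofReal_mul (by positivity)]
    apply ENNReal.ofReal_le_ofReal
    have h1 : ((K.choose n : ℕ) : ℝ) ≤ (K : ℝ) ^ n / n.factorial :=
      Nat.choose_le_pow_div n K
    calc ((K.choose n : ℕ) : ℝ) * (r / K) ^ n
        = ((K.choose n : ℕ) : ℝ) * (r ^ n / (K : ℝ) ^ n) := by rw [div_pow]
      _ ≤ ((K : ℝ) ^ n / n.factorial) * (r ^ n / (K : ℝ) ^ n) := by
          apply mul_le_mul_of_nonneg_right h1 (by positivity)
      _ = r ^ n / n.factorial := by field_simp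
  calc ∑ n ∈ Finset.range (K + 1), (a ^ K * ((K.choose n : ℕ) : ℝ≥0∞) * c ^ n) • f n
      ≤ ∑ n ∈ Finset.range (K + 1),
          a ^ K * (ENNReal.ofReal (r ^ n / n.factorial) * f n) := by
        refine Finset.sum_le_sum fun n _ => ?_
        rw [smul_eq_mul, show a ^ K * ((K.choose n : ℕ) : ℝ≥0∞) * c ^ n * f n
          = a ^ K * (((K.choose n : ℕ) : ℝ≥0∞) * c ^ n * f n) by ring]
        exact mul_le_mul_right (mul_le_mul_left (hterm n) (f n)) _
    _ = a ^ K * ∑ n ∈ Finset.range (K + 1),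
          ENNReal.ofReal (r ^ n / n.factorial) * f n := by rw [Finset.mul_sum]
    _ ≤ a ^ K * ∑' n, ENNReal.ofReal (r ^ n / n.factorial) * f n :=
        mul_le_mul_right (ENNReal.sum_le_tsum _) _
    _ = _ := by rw [haK]
end

section
/- Let μ be a probability measure on M and r ≥ 0 a real number. For each natural number K ≥ 1 set λ_K = (1 + r/K)^{−1} • (δ_1 + (r/K) • μ). Then for every ε > 0 there exists K₀ such that for all K ≥ K₀ and every measurable set X, |λ_K^{*K}(X) − e^{r(μ⋆−1)}(X)| ≤ ε; that is, the binomial approximations λ_K^{*K} converge to the convolution exponential e^{r(μ⋆−1)} uniformly over measurable sets as K → ∞. -/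
open MeasureTheory

open Filter
open scoped ENNReal Topology

set_option linter.unusedSectionVars false

section MeasureLemmas

variable {M : Type*} [Monoid M] [MeasurableSpace M]

lemma smul_mconv (c : ℝ≥0∞) (μ ν : Measure M) [SFinite μ] [SFinite ν] :
    Measure.mconv (c • μ) ν = c • Measure.mconv μ ν := by
  have h : (c • μ).prod ν = c • (μ.prod ν) := by
    ext s hs
    rw [Measure.prod_apply hs, Measure.smul_apply, Measure.prod_apply hs,
      lintegral_smul_measure, smul_eq_mul]
  unfold Measure.mconv
  rw [h, Measure.map_smul]

lemma mconv_smul (c : ℝ≥0∞) (μ ν : Measure M) [SFinite μ] [SFinite ν] :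
    Measure.mconv μ (c • ν) = c • Measure.mconv μ ν := by
  have h : μ.prod (c • ν) = c • (μ.prod ν) := by
    ext s hs
    rw [Measure.prod_apply hs, Measure.smul_apply, Measure.prod_apply hs, smul_eq_mul,
      ← lintegral_const_mul _ (measurable_measure_prodMk_left hs)]
    simp [Measure.smul_apply, smul_eq_mul]
  unfold Measure.mconv
  rw [h, Measure.map_smul]

lemma sfinite_finsetSum {ι : Type*} (s : Finset ι) (f : ι → Measure M) [∀ i, SFinite (f i)] :
    SFinite (∑ i ∈ s, f i) := by
  classical
  induction s using Finset.induction with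
  | empty => simp only [Finset.sum_empty]; infer_instance
  | insert _ _ h ih =>
    rw [Finset.sum_insert h]
    have := ih
    infer_instance

lemma finsetSum_mconv [MeasurableMul₂ M] {ι : Type*} (s : Finset ι) (f : ι → Measure M)
    [∀ i, SFinite (f i)] (ν : Measure M) [SFinite ν] :
    Measure.mconv (∑ i ∈ s, f i) ν = ∑ i ∈ s, Measure.mconv (f i) ν := by
  classical
  induction s using Finset.induction with
  | empty => simp only [Finset.sum_empty]; exact Measure.zero_mconv ν
  | insert _ _ h ih =>
    have := sfinite_finsetSum ‹_› f
    rw [Finset.sum_insert h, Measure.add_mconv, ih, Finset.sum_insert h]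

lemma isProb_mconvPow [MeasurableMul₂ M] (μ : Measure M) [IsProbabilityMeasure μ] (n : ℕ) :
    IsProbabilityMeasure (mconvPow μ n) := by
  induction n with
  | zero => unfold mconvPow; infer_instance
  | succ n ih => unfold mconvPow; exact Measure.probabilitymeasure_of_probabilitymeasures_mconv _ _

end MeasureLemmas

lemma mconvPow_expand {M : Type*} [CommMonoid M] [MeasurableSpace M] [MeasurableMul₂ M]
    (μ : Measure M) [IsProbabilityMeasure μ] (α β : ℝ≥0∞) (K : ℕ) :
    mconvPow (α • Measure.dirac 1 + β • μ) K
      = ∑ j ∈ Finset.range (K + 1),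
          (α ^ (K - j) * β ^ j * (K.choose j : ℝ≥0∞)) • mconvPow μ j := by
  haveI := fun n => isProb_mconvPow μ n
  induction K with
  | zero => simp [mconvPow]
  | succ K ih =>
    have hSf : ∀ (s : Finset ℕ) (f : ℕ → Measure M), (∀ i, SFinite (f i)) →
        SFinite (∑ i ∈ s, f i) := fun s f h => sfinite_finsetSum s f
    haveI hS : SFinite (∑ j ∈ Finset.range (K + 1),
        (α ^ (K - j) * β ^ j * (K.choose j : ℝ≥0∞)) • mconvPow μ j) :=
      hSf _ _ fun i => inferInstance
    have step : mconvPow (α • Measure.dirac 1 + β • μ) (K + 1)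
        = α • (∑ j ∈ Finset.range (K + 1),
            (α ^ (K - j) * β ^ j * (K.choose j : ℝ≥0∞)) • mconvPow μ j)
          + β • (∑ j ∈ Finset.range (K + 1),
            (α ^ (K - j) * β ^ j * (K.choose j : ℝ≥0∞)) • mconvPow μ (j + 1)) := by
      show Measure.mconv (mconvPow (α • Measure.dirac 1 + β • μ) K) _ = _
      rw [ih, Measure.mconv_add, mconv_smul, mconv_smul, Measure.mconv_dirac_one,
        finsetSum_mconv]
      congr 1
      refine congrArg _ (Finset.sum_congr rfl fun j _ => ?_)
      rw [smul_mconv]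
      rfl
    rw [step, Finset.smul_sum, Finset.smul_sum]
    rw [Finset.sum_range_succ' (fun j => (α ^ (K + 1 - j) * β ^ j * ((K+1).choose j : ℝ≥0∞)) • mconvPow μ j)]
    rw [Finset.sum_range_succ (fun j => (α ^ (K + 1 - (j+1)) * β ^ (j+1) * ((K+1).choose (j+1) : ℝ≥0∞)) • mconvPow μ (j+1))]
    rw [Finset.sum_range_succ' (fun j => α • ((α ^ (K - j) * β ^ j * (K.choose j : ℝ≥0∞)) • mconvPow μ j))]
    rw [Finset.sum_range_succ (fun j => β • ((α ^ (K - j) * β ^ j * (K.choose j : ℝ≥0∞)) • mconvPow μ (j+1)))]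
    have hterm : ∀ j ∈ Finset.range K,
        (α ^ (K + 1 - (j+1)) * β ^ (j+1) * ((K+1).choose (j+1) : ℝ≥0∞)) • mconvPow μ (j+1)
        = α • ((α ^ (K - (j+1)) * β ^ (j+1) * (K.choose (j+1) : ℝ≥0∞)) • mconvPow μ (j+1))
          + β • ((α ^ (K - j) * β ^ j * (K.choose j : ℝ≥0∞)) • mconvPow μ (j+1)) := by
      intro j hj
      rw [Finset.mem_range] at hj
      rw [smul_smul, smul_smul, ← add_smul]
      congr 1
      have h1 : K + 1 - (j + 1) = K - j := by omega
      have h2 : K - j = (K - (j + 1)) + 1 := by omega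
      rw [h1, Nat.choose_succ_succ, Nat.cast_add, h2]
      ring
    rw [Finset.sum_congr rfl hterm, Finset.sum_add_distrib]
    have e0 : (α ^ (K + 1 - 0) * β ^ 0 * ((K+1).choose 0 : ℝ≥0∞)) • mconvPow μ 0
        = α • ((α ^ (K - 0) * β ^ 0 * (K.choose 0 : ℝ≥0∞)) • mconvPow μ 0) := by
      rw [smul_smul]; congr 1; simp [pow_succ]; ring
    have eK : (α ^ (K + 1 - (K+1)) * β ^ (K+1) * ((K+1).choose (K+1) : ℝ≥0∞)) • mconvPow μ (K+1)
        = β • ((α ^ (K - K) * β ^ K * (K.choose K : ℝ≥0∞)) • mconvPow μ (K+1)) := by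
      rw [smul_smul]; congr 1; simp [pow_succ]; ring
    rw [e0, eK]
    abel
noncomputable def aCoef (r : ℝ) (K n : ℕ) : ℝ :=
  ((1 + r / K) ^ K)⁻¹ * (K.choose n) * (r / K) ^ n

noncomputable def bCoef (r : ℝ) (n : ℕ) : ℝ := Real.exp (-r) * (r ^ n / n.factorial)

lemma aCoef_nonneg {r : ℝ} (hr : 0 ≤ r) (K n : ℕ) : 0 ≤ aCoef r K n := by
  have h : (0:ℝ) ≤ r / K := div_nonneg hr (Nat.cast_nonneg K)
  unfold aCoef
  positivity

lemma bCoef_nonneg {r : ℝ} (hr : 0 ≤ r) (n : ℕ) : 0 ≤ bCoef r n := by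
  unfold bCoef; positivity

lemma aCoef_eq_zero {r : ℝ} {K n : ℕ} (h : K < n) : aCoef r K n = 0 := by
  unfold aCoef
  rw [Nat.choose_eq_zero_of_lt h]
  simp

lemma summable_aCoef (r : ℝ) (K : ℕ) : Summable (aCoef r K) :=
  summable_of_ne_finset_zero (s := Finset.range (K + 1)) fun n hn =>
    aCoef_eq_zero (by simpa [Nat.lt_succ_iff] using fun h => hn (Finset.mem_range.2 (Nat.lt_succ_of_le h)))

lemma summable_bCoef (r : ℝ) : Summable (bCoef r) :=
  (Real.summable_pow_div_factorial r).mul_left _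

lemma tsum_aCoef {r : ℝ} (hr : 0 ≤ r) (K : ℕ) : ∑' n, aCoef r K n = 1 := by
  rw [tsum_eq_sum (s := Finset.range (K + 1))
    (fun n hn => aCoef_eq_zero (by simpa [Finset.mem_range, Nat.lt_succ_iff, not_le] using hn))]
  have hpos : (0:ℝ) < 1 + r / K :=
    add_pos_of_pos_of_nonneg one_pos (div_nonneg hr (Nat.cast_nonneg K))
  have hbin : (r / K + 1) ^ K
      = ∑ j ∈ Finset.range (K + 1), (r / K) ^ j * 1 ^ (K - j) * (K.choose j) := add_pow _ _ _
  unfold aCoef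
  have : ∑ j ∈ Finset.range (K + 1), ((1 + r / ↑K) ^ K)⁻¹ * ↑(K.choose j) * (r / ↑K) ^ j
      = ((1 + r / ↑K) ^ K)⁻¹ * ∑ j ∈ Finset.range (K + 1), (r / K) ^ j * 1 ^ (K - j) * (K.choose j) := by
    rw [Finset.mul_sum]
    exact Finset.sum_congr rfl fun j _ => by ring
  rw [this, ← hbin, add_comm (r / (K:ℝ)) 1, inv_mul_cancel₀ (pow_ne_zero _ hpos.ne')]

lemma tsum_bCoef (r : ℝ) : ∑' n, bCoef r n = 1 := by
  unfold bCoef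
  rw [tsum_mul_left]
  have : ∑' n : ℕ, r ^ n / n.factorial = Real.exp r := by
    rw [Real.exp_eq_exp_ℝ, NormedSpace.exp_eq_tsum_div]
  rw [this, ← Real.exp_add]
  simp

lemma tendsto_aCoef (r : ℝ) (n : ℕ) :
    Tendsto (fun K : ℕ => aCoef r K n) atTop (𝓝 (bCoef r n)) := by
  have t1 : Tendsto (fun K : ℕ => ((1 + r / K) ^ K)⁻¹) atTop (𝓝 (Real.exp r)⁻¹) :=
    (Real.tendsto_one_add_div_pow_exp r).inv₀ (Real.exp_ne_zero r)
  have t2 : Tendsto (fun K : ℕ => ∏ i ∈ Finset.range n, (1 - (i : ℝ) / K)) atTop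
      (𝓝 (∏ _i ∈ Finset.range n, (1 : ℝ))) := by
    refine tendsto_finset_prod _ fun i _ => ?_
    have : Tendsto (fun K : ℕ => (i : ℝ) / K) atTop (𝓝 0) :=
      tendsto_const_div_atTop_nhds_zero_nat _
    simpa using tendsto_const_nhds.sub this
  have t3 : Tendsto
      (fun K : ℕ => ((1 + r / K) ^ K)⁻¹ * ((∏ i ∈ Finset.range n, (1 - (i : ℝ) / K)) * (r ^ n / n.factorial)))
      atTop (𝓝 ((Real.exp r)⁻¹ * ((∏ _i ∈ Finset.range n, (1 : ℝ)) * (r ^ n / n.factorial)))) :=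
    t1.mul (t2.mul tendsto_const_nhds)
  have hlim : (Real.exp r)⁻¹ * ((∏ _i ∈ Finset.range n, (1 : ℝ)) * (r ^ n / n.factorial))
      = bCoef r n := by
    rw [Finset.prod_const_one, ← Real.exp_neg]; unfold bCoef; ring
  rw [hlim] at t3
  refine t3.congr' ?_
  filter_upwards [eventually_ge_atTop (max n 1)] with K hK
  have hn : n ≤ K := le_trans (le_max_left _ _) hK
  have hK1 : 1 ≤ K := le_trans (le_max_right _ _) hK
  have hKpos : (0:ℝ) < K := by exact_mod_cast hK1
  have hdesc : (K.descFactorial n : ℝ) = ∏ i ∈ Finset.range n, ((K:ℝ) - i) := by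
    rw [Nat.descFactorial_eq_prod_range, Nat.cast_prod]
    exact Finset.prod_congr rfl fun i hi =>
      Nat.cast_sub (le_trans (le_of_lt (Finset.mem_range.1 hi)) hn)
  have hchoose : (K.choose n : ℝ) = (∏ i ∈ Finset.range n, ((K:ℝ) - i)) / n.factorial := by
    have h := Nat.descFactorial_eq_factorial_mul_choose K n
    have : (K.descFactorial n : ℝ) = (n.factorial : ℝ) * K.choose n := by exact_mod_cast h
    rw [hdesc] at this
    field_simp [this]
    rw [this]; ring
  have hprod : ∏ i ∈ Finset.range n, (1 - (i:ℝ) / K)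
      = (∏ i ∈ Finset.range n, ((K:ℝ) - i)) / K ^ n := by
    rw [show ((K:ℝ)) ^ n = ∏ _i ∈ Finset.range n, (K:ℝ) from by
        rw [Finset.prod_const, Finset.card_range],
      ← Finset.prod_div_distrib]
    exact Finset.prod_congr rfl fun i _ => by field_simp
  rw [hprod]
  unfold aCoef
  rw [hchoose, div_pow]
  have hfac : (n.factorial : ℝ) ≠ 0 := by exact_mod_cast n.factorial_ne_zero
  field_simp

lemma tendsto_l1 {r : ℝ} (hr : 0 ≤ r) :
    Tendsto (fun K : ℕ => ∑' n, |aCoef r K n - bCoef r n|) atTop (𝓝 0) := by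
  have smax : ∀ K, Summable (fun n => max (bCoef r n - aCoef r K n) 0) := fun K =>
    (summable_bCoef r).of_nonneg_of_le (fun n => le_max_right _ _)
      (fun n => max_le (by linarith [aCoef_nonneg hr K n]) (bCoef_nonneg hr n))
  have key : ∀ K, ∑' n, |aCoef r K n - bCoef r n|
      = 2 * ∑' n, max (bCoef r n - aCoef r K n) 0 := by
    intro K
    have h1 : ∀ n, |aCoef r K n - bCoef r n|
        = (aCoef r K n - bCoef r n) + 2 * max (bCoef r n - aCoef r K n) 0 := by
      intro n
      rcases le_total (bCoef r n) (aCoef r K n) with h | h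
      · rw [abs_of_nonneg (by linarith), max_eq_right (by linarith)]; ring
      · rw [abs_of_nonpos (by linarith), max_eq_left (by linarith)]; ring
    rw [tsum_congr h1,
      Summable.tsum_add ((summable_aCoef r K).sub (summable_bCoef r)) ((smax K).mul_left 2),
      Summable.tsum_sub (summable_aCoef r K) (summable_bCoef r), tsum_aCoef hr K, tsum_bCoef r,
      tsum_mul_left]
    ring
  have t0 : Tendsto (fun K : ℕ => ∑' n, max (bCoef r n - aCoef r K n) 0) atTop (𝓝 0) := by
    have h := tendsto_tsum_of_dominated_convergence (𝓕 := atTop)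
      (f := fun K n => max (bCoef r n - aCoef r K n) 0)
      (g := fun _ => (0:ℝ)) (bound := bCoef r) (summable_bCoef r)
      (fun n => by
        have h1 : Tendsto (fun K : ℕ => bCoef r n - aCoef r K n) atTop (𝓝 0) := by
          simpa using (tendsto_const_nhds (x := bCoef r n)).sub (tendsto_aCoef r n)
        have h2 : Tendsto (fun K : ℕ => max (bCoef r n - aCoef r K n) 0) atTop (𝓝 (max 0 0)) :=
          h1.max tendsto_const_nhds
        simpa using h2)
      (by filter_upwards with K
          intro n
          rw [Real.norm_eq_abs, abs_of_nonneg (le_max_right _ _)]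
          exact max_le (by linarith [aCoef_nonneg hr K n]) (bCoef_nonneg hr n))
    simpa using h
  have final : Tendsto (fun K : ℕ => 2 * ∑' n, max (bCoef r n - aCoef r K n) 0) atTop (𝓝 0) := by
    simpa using t0.const_mul 2
  exact final.congr fun K => (key K).symm

theorem stmt7 {M : Type*} [CommMonoid M] [MeasurableSpace M] [MeasurableMul₂ M]
    (μ : Measure M) [IsProbabilityMeasure μ] (r : ℝ) (hr : 0 ≤ r) :
    ∀ ε : ℝ, 0 < ε → ∃ K₀ : ℕ, ∀ K : ℕ, K₀ ≤ K → 1 ≤ K →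
      ∀ X : Set M, MeasurableSet X →
        |(mconvPow ((ENNReal.ofReal (1 + r / K))⁻¹ •
              (Measure.dirac (1 : M) + ENNReal.ofReal (r / K) • μ)) K X).toReal -
            (convExp μ r X).toReal| ≤ ε := by
  intro ε hε
  obtain ⟨K₀, hK₀⟩ := Metric.tendsto_atTop.mp (tendsto_l1 hr) ε hε
  refine ⟨K₀, fun K hK hK1 X hX => ?_⟩
  haveI := fun n => isProb_mconvPow μ n
  set p : ℕ → ℝ := fun n => (mconvPow μ n X).toReal with hp
  have hp0 : ∀ n, 0 ≤ p n := fun n => ENNReal.toReal_nonneg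
  have hp1 : ∀ n, p n ≤ 1 := fun n => by
    have h1 : mconvPow μ n X ≤ 1 := prob_le_one
    simpa using ENNReal.toReal_mono ENNReal.one_ne_top h1
  have hrK : (0:ℝ) ≤ r / K := div_nonneg hr (Nat.cast_nonneg K)
  have h1rK : (0:ℝ) < 1 + r / K := by linarith
  set α : ℝ≥0∞ := (ENNReal.ofReal (1 + r / K))⁻¹ with hαdef
  have hα_ne_top : α ≠ ⊤ :=
    ENNReal.inv_ne_top.mpr (ENNReal.ofReal_pos.mpr h1rK).ne'
  have hmeas : (ENNReal.ofReal (1 + r / K))⁻¹ •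
        (Measure.dirac (1 : M) + ENNReal.ofReal (r / K) • μ)
      = α • Measure.dirac 1 + (α * ENNReal.ofReal (r / K)) • μ := by
    rw [smul_add, smul_smul]
  rw [hmeas, mconvPow_expand μ _ _ K]
  -- evaluate the finset sum measure on X
  rw [Measure.finset_sum_apply]
  simp only [Measure.smul_apply, smul_eq_mul]
  have hterm_ne_top : ∀ j ∈ Finset.range (K + 1),
      α ^ (K - j) * (α * ENNReal.ofReal (r / K)) ^ j * (K.choose j : ℝ≥0∞) * mconvPow μ j X ≠ ⊤ := by
    intro j _
    refine ENNReal.mul_ne_top (ENNReal.mul_ne_top (ENNReal.mul_ne_top ?_ ?_) ?_) (measure_ne_top _ _)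
    · exact ENNReal.pow_ne_top hα_ne_top
    · exact ENNReal.pow_ne_top (ENNReal.mul_ne_top hα_ne_top ENNReal.ofReal_ne_top)
    · exact ENNReal.natCast_ne_top _
  rw [ENNReal.toReal_sum hterm_ne_top]
  have hcoef : ∀ j ∈ Finset.range (K + 1),
      (α ^ (K - j) * (α * ENNReal.ofReal (r / K)) ^ j * (K.choose j : ℝ≥0∞) * mconvPow μ j X).toReal
      = aCoef r K j * p j := by
    intro j hj
    have hjK : j ≤ K := Nat.lt_succ_iff.mp (Finset.mem_range.mp hj)
    rw [ENNReal.toReal_mul, ENNReal.toReal_mul, ENNReal.toReal_mul, ENNReal.toReal_pow,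
      ENNReal.toReal_pow, ENNReal.toReal_mul, ENNReal.toReal_natCast]
    have hαval : α.toReal = (1 + r / K)⁻¹ := by
      rw [hαdef, ENNReal.toReal_inv, ENNReal.toReal_ofReal h1rK.le]
    rw [hαval, ENNReal.toReal_ofReal hrK]
    have hpowsplit : ((1 + r / (K:ℝ))⁻¹) ^ (K - j) * ((1 + r / (K:ℝ))⁻¹) ^ j
        = ((1 + r / (K:ℝ)) ^ K)⁻¹ := by
      rw [← pow_add, Nat.sub_add_cancel hjK, inv_pow]
    show (1 + r / (K:ℝ))⁻¹ ^ (K - j) * ((1 + r / (K:ℝ))⁻¹ * (r / K)) ^ j * (K.choose j : ℝ) * p j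
        = aCoef r K j * p j
    rw [mul_pow]
    unfold aCoef
    rw [← hpowsplit]
    ring
  rw [Finset.sum_congr rfl hcoef]
  -- evaluate convExp
  have hconv : (convExp μ r X).toReal = ∑' n, bCoef r n * p n := by
    unfold convExp
    rw [Measure.smul_apply, Measure.sum_apply _ hX, smul_eq_mul, ENNReal.toReal_mul,
      ENNReal.tsum_toReal_eq (fun n => by
        rw [Measure.smul_apply, smul_eq_mul]
        exact ENNReal.mul_ne_top ENNReal.ofReal_ne_top (measure_ne_top _ _)),
      ENNReal.toReal_ofReal (Real.exp_nonneg _), ← tsum_mul_left]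
    exact tsum_congr fun n => by
      rw [Measure.smul_apply, smul_eq_mul, ENNReal.toReal_mul,
        ENNReal.toReal_ofReal (by positivity)]
      unfold bCoef
      ring
  rw [hconv]
  -- replace finset sum by tsum
  have hzero : ∀ n ∉ Finset.range (K + 1), aCoef r K n * p n = 0 := by
    intro n hn
    have hKn : K < n := by
      by_contra h
      exact hn (Finset.mem_range.mpr (by omega))
    rw [aCoef_eq_zero hKn, zero_mul]
  rw [show ∑ j ∈ Finset.range (K + 1), aCoef r K j * p j = ∑' n, aCoef r K n * p n from
    (tsum_eq_sum hzero).symm]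
  have hsum_ap : Summable (fun n => aCoef r K n * p n) :=
    summable_of_ne_finset_zero (s := Finset.range (K + 1)) hzero
  have hsum_bp : Summable (fun n => bCoef r n * p n) :=
    (summable_bCoef r).of_nonneg_of_le
      (fun n => mul_nonneg (bCoef_nonneg hr n) (hp0 n))
      (fun n => mul_le_of_le_one_right (bCoef_nonneg hr n) (hp1 n))
  rw [← Summable.tsum_sub hsum_ap hsum_bp]
  have hsdiff : Summable (fun n => aCoef r K n * p n - bCoef r n * p n) := hsum_ap.sub hsum_bp
  have hsabd : Summable (fun n => |aCoef r K n - bCoef r n|) :=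
    ((summable_aCoef r K).sub (summable_bCoef r)).abs
  have step1 : |∑' n, (aCoef r K n * p n - bCoef r n * p n)|
      ≤ ∑' n, |aCoef r K n * p n - bCoef r n * p n| := by
    simpa using norm_tsum_le_tsum_norm (f := fun n => aCoef r K n * p n - bCoef r n * p n)
      (by simpa using hsdiff.abs)
  have step2 : ∑' n, |aCoef r K n * p n - bCoef r n * p n|
      ≤ ∑' n, |aCoef r K n - bCoef r n| := by
    refine Summable.tsum_le_tsum (fun n => ?_) hsdiff.abs hsabd
    rw [← sub_mul, abs_mul]
    exact mul_le_of_le_one_right (abs_nonneg _) (abs_le.mpr ⟨by linarith [hp0 n], hp1 n⟩)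
  have step3 : ∑' n, |aCoef r K n - bCoef r n| ≤ ε := by
    have h := hK₀ K hK
    rw [Real.dist_eq, sub_zero,
      abs_of_nonneg (tsum_nonneg fun n => abs_nonneg _)] at h
    exact h.le
  linarith
end

section
/- Let μ be a probability measure on M, let r ≥ 0 be real, let K ≥ 1 be a natural number, and set λ = (1 + r/K)^{−1} • (δ_1 + (r/K) • μ). Then for every natural number L and every measurable set X, |λ^{*(K+L)}(X) − λ^{*K}(X)| ≤ 2·r·L/K. -/
open MeasureTheory ENNReal

lemma mconv_smul_right' {M : Type*} [Monoid M] [MeasurableSpace M] [MeasurableMul₂ M]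
    (μ ν : Measure M) [SFinite μ] [SFinite ν] (c : ℝ≥0∞) :
    μ.mconv (c • ν) = c • μ.mconv ν := by
  unfold Measure.mconv
  ext s hs
  rw [Measure.map_apply (by fun_prop) hs, Measure.smul_apply,
    Measure.map_apply (by fun_prop) hs,
    Measure.prod_apply ((by fun_prop : Measurable fun x : M × M => x.1 * x.2) hs),
    Measure.prod_apply ((by fun_prop : Measurable fun x : M × M => x.1 * x.2) hs)]
  simp only [Measure.smul_apply, smul_eq_mul]
  rw [lintegral_const_mul _ (measurable_measure_prodMk_left
    ((by fun_prop : Measurable fun x : M × M => x.1 * x.2) hs))]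

lemma real_step' (t x y : ℝ) (ht : 0 ≤ t) (hx0 : 0 ≤ x) (hx1 : x ≤ 1)
    (hy0 : 0 ≤ y) (hy1 : y ≤ 1) :
    |(1 + t)⁻¹ * (x + t * y) - x| ≤ t := by
  have hpos : (0:ℝ) < 1 + t := by linarith
  have key : (1 + t)⁻¹ * (x + t * y) - x = t * (y - x) / (1 + t) := by
    field_simp; ring
  rw [key, abs_div, abs_of_pos hpos, div_le_iff₀ hpos, abs_mul, abs_of_nonneg ht]
  have h1 : |y - x| ≤ 1 := abs_le.2 ⟨by linarith, by linarith⟩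
  nlinarith [abs_nonneg (y - x)]

theorem stmt12 {M : Type*} [CommMonoid M] [MeasurableSpace M] [MeasurableMul₂ M]
    (μ : Measure M) [IsProbabilityMeasure μ]
    (r : ℝ) (hr : 0 ≤ r) (K : ℕ) (hK : 1 ≤ K) (L : ℕ) :
    ∀ X : Set M, MeasurableSet X →
      |(mconvPow ((ENNReal.ofReal (1 + r / K))⁻¹ •
            (Measure.dirac (1 : M) + ENNReal.ofReal (r / K) • μ)) (K + L) X).toReal -
          (mconvPow ((ENNReal.ofReal (1 + r / K))⁻¹ •
            (Measure.dirac (1 : M) + ENNReal.ofReal (r / K) • μ)) K X).toReal| ≤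
        2 * r * L / K := by
  have hKpos : (0:ℝ) < K := by exact_mod_cast hK
  set t : ℝ := r / K with ht_def
  have ht : 0 ≤ t := div_nonneg hr hKpos.le
  set c : ℝ≥0∞ := ENNReal.ofReal t with hc_def
  set a : ℝ≥0∞ := ENNReal.ofReal (1 + t) with ha_def
  have ha : a = 1 + c := by
    rw [ha_def, hc_def, ENNReal.ofReal_add zero_le_one ht, ENNReal.ofReal_one]
  have hcT : c ≠ ⊤ := ENNReal.ofReal_ne_top
  have ha0 : a ≠ 0 := by
    rw [ha]; simp
  have haT : a ≠ ⊤ := ENNReal.ofReal_ne_top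
  set lam : Measure M := a⁻¹ • (Measure.dirac (1 : M) + c • μ) with hlam_def
  have hlamprob : IsProbabilityMeasure lam := by
    constructor
    rw [hlam_def]
    simp only [Measure.smul_apply, Measure.add_apply, smul_eq_mul,
      MeasureTheory.measure_univ, Measure.dirac_apply_of_mem (Set.mem_univ _), mul_one]
    rw [← ha]
    exact ENNReal.inv_mul_cancel ha0 haT
  have hpow : ∀ n, IsProbabilityMeasure (mconvPow lam n) := by
    intro n
    induction n with
    | zero => exact Measure.dirac.isProbabilityMeasure
    | succ n ih =>
      show IsProbabilityMeasure ((mconvPow lam n).mconv lam)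
      exact Measure.probabilitymeasure_of_probabilitymeasures_mconv _ _
  -- one step
  have step : ∀ n (X : Set M), MeasurableSet X →
      |(mconvPow lam (n + 1) X).toReal - (mconvPow lam n X).toReal| ≤ t := by
    intro n X hX
    have hp := hpow n
    have hfin : IsFiniteMeasure (mconvPow lam n) := inferInstance
    have hconvprob : IsProbabilityMeasure ((mconvPow lam n).mconv μ) :=
      Measure.probabilitymeasure_of_probabilitymeasures_mconv _ _
    have hrw : mconvPow lam (n + 1) =
        a⁻¹ • (mconvPow lam n + c • (mconvPow lam n).mconv μ) := by
      show (mconvPow lam n).mconv lam = _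
      rw [hlam_def, mconv_smul_right', Measure.mconv_add, mconv_smul_right',
        Measure.mconv_dirac_one]
    rw [hrw]
    set x : ℝ≥0∞ := mconvPow lam n X with hx_def
    set y : ℝ≥0∞ := (mconvPow lam n).mconv μ X with hy_def
    have hx1 : x ≤ 1 := prob_le_one
    have hy1 : y ≤ 1 := prob_le_one
    have hxT : x ≠ ⊤ := (lt_of_le_of_lt hx1 ENNReal.one_lt_top).ne
    have hyT : y ≠ ⊤ := (lt_of_le_of_lt hy1 ENNReal.one_lt_top).ne
    have happ : (a⁻¹ • (mconvPow lam n + c • (mconvPow lam n).mconv μ)) X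
        = a⁻¹ * (x + c * y) := by
      simp only [Measure.smul_apply, Measure.add_apply, smul_eq_mul]
      rfl
    rw [happ]
    have htr : (a⁻¹ * (x + c * y)).toReal = (1 + t)⁻¹ * (x.toReal + t * y.toReal) := by
      rw [ENNReal.toReal_mul, ENNReal.toReal_inv, ha_def,
        ENNReal.toReal_ofReal (by linarith),
        ENNReal.toReal_add hxT (ENNReal.mul_ne_top hcT hyT),
        ENNReal.toReal_mul, hc_def, ENNReal.toReal_ofReal ht]
    rw [htr]
    refine real_step' t x.toReal y.toReal ht ENNReal.toReal_nonneg ?_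
      ENNReal.toReal_nonneg ?_
    · simpa using ENNReal.toReal_mono (by simp) hx1
    · simpa using ENNReal.toReal_mono (by simp) hy1
  -- telescoping
  intro X hX
  have main : ∀ L' : ℕ,
      |(mconvPow lam (K + L') X).toReal - (mconvPow lam K X).toReal| ≤ L' * t := by
    intro L'
    induction L' with
    | zero => simp
    | succ n ih =>
      have h1 := step (K + n) X hX
      calc |(mconvPow lam (K + (n + 1)) X).toReal - (mconvPow lam K X).toReal|
          ≤ |(mconvPow lam (K + n + 1) X).toReal - (mconvPow lam (K + n) X).toReal|
            + |(mconvPow lam (K + n) X).toReal - (mconvPow lam K X).toReal| := by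
            rw [show K + (n + 1) = K + n + 1 from rfl]
            exact abs_sub_le _ _ _
        _ ≤ t + n * t := add_le_add h1 ih
        _ = ((n:ℝ) + 1) * t := by ring
        _ = ((n + 1 : ℕ) : ℝ) * t := by push_cast; ring
  have := main L
  have hL : (0:ℝ) ≤ L := Nat.cast_nonneg L
  calc |(mconvPow lam (K + L) X).toReal - (mconvPow lam K X).toReal|
      ≤ L * t := this
    _ = (L * r) / K := by rw [ht_def]; ring
    _ ≤ 2 * r * L / K := by
        gcongr ?_ / (K:ℝ)
        nlinarith [mul_nonneg hr hL]
end

section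
/- Let μ be a probability measure on M and r ≥ 0 a real number. Then there exists a map X from the real interval [0,1] to probability measures on M such that X(0) = δ_1, X(1) = e^{r(μ⋆−1)}, and X(s+t) = X(s) ⋆ X(t) whenever s, t, s+t ∈ [0,1]; that is, there is a Lévy process with respect to the timeline [0,1] corresponding to the convolution exponential e^{r(μ⋆−1)}. Indeed, X(t) = e^{t·r(μ⋆−1)} is such a process. -/
open MeasureTheory

section Aux

variable {M : Type*} [CommMonoid M] [MeasurableSpace M] [MeasurableMul₂ M]

lemma aux_prod_smul_left (c : ENNReal) (μ ν : Measure M) [SFinite ν] :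
    (c • μ).prod ν = c • μ.prod ν := by
  ext s hs
  simp [Measure.prod_apply hs, lintegral_smul_measure]

lemma aux_mconv_smul_left (c : ENNReal) (μ ν : Measure M) [SFinite ν] :
    (c • μ).mconv ν = c • μ.mconv ν := by
  unfold Measure.mconv
  rw [aux_prod_smul_left, Measure.map_smul]

lemma aux_mconv_smul_right (c : ENNReal) (μ ν : Measure M) [SFinite μ] [SFinite ν] :
    μ.mconv (c • ν) = c • μ.mconv ν := by
  rw [Measure.mconv_comm, aux_mconv_smul_left, Measure.mconv_comm]

lemma aux_mconv_sum_left {ι : Type*} (m : ι → Measure M) (ν : Measure M) [SFinite ν] :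
    (Measure.sum m).mconv ν = Measure.sum fun i => (m i).mconv ν := by
  unfold Measure.mconv
  rw [Measure.prod_sum_left,
    Measure.map_sum (measurable_mul : Measurable fun x : M × M => x.1 * x.2).aemeasurable]

lemma aux_mconv_sum_right {ι : Type*} [Countable ι] (μ : Measure M) (m : ι → Measure M)
    [SFinite μ] [∀ i, SFinite (m i)] :
    μ.mconv (Measure.sum m) = Measure.sum fun i => μ.mconv (m i) := by
  rw [Measure.mconv_comm, aux_mconv_sum_left]
  congr 1
  ext1 i
  rw [Measure.mconv_comm]

lemma aux_mconv_assoc (μ ν ρ : Measure M) [SFinite μ] [SFinite ν] [SFinite ρ] :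
    (μ.mconv ν).mconv ρ = μ.mconv (ν.mconv ρ) := by
  have hm : Measurable fun p : M × M => p.1 * p.2 := measurable_mul
  unfold Measure.mconv
  have h1 : (Measure.map (fun x : M × M => x.1 * x.2) (μ.prod ν)).prod ρ
      = Measure.map (Prod.map (fun x : M × M => x.1 * x.2) id) ((μ.prod ν).prod ρ) := by
    conv_lhs => rw [← Measure.map_id (μ := ρ)]
    exact Measure.map_prod_map _ _ hm measurable_id
  have h2 : μ.prod (Measure.map (fun x : M × M => x.1 * x.2) (ν.prod ρ))
      = Measure.map (Prod.map (id : M → M) (fun x : M × M => x.1 * x.2)) (μ.prod (ν.prod ρ)) := by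
    conv_lhs => rw [← Measure.map_id (μ := μ)]
    exact Measure.map_prod_map _ _ measurable_id hm
  rw [h1, h2, ← Measure.prodAssoc_prod,
    Measure.map_map hm (hm.prodMap measurable_id),
    Measure.map_map (measurable_id.prodMap hm) MeasurableEquiv.prodAssoc.measurable,
    Measure.map_map hm ((measurable_id.prodMap hm).comp MeasurableEquiv.prodAssoc.measurable)]
  congr 1
  funext p
  simp [MeasurableEquiv.prodAssoc, Equiv.prodAssoc, mul_assoc]

instance aux_mconvPow_prob (μ : Measure M) [IsProbabilityMeasure μ] (n : ℕ) :
    IsProbabilityMeasure (mconvPow μ n) := by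
  induction n with
  | zero => rw [mconvPow]; infer_instance
  | succ n ih => rw [mconvPow]; infer_instance

lemma aux_mconvPow_add (μ : Measure M) [IsProbabilityMeasure μ] (m n : ℕ) :
    (mconvPow μ m).mconv (mconvPow μ n) = mconvPow μ (m + n) := by
  induction n with
  | zero => simpa [mconvPow] using Measure.mconv_dirac_one (mconvPow μ m)
  | succ n ih =>
    have : m + (n + 1) = (m + n) + 1 := by ring
    rw [this]
    show (mconvPow μ m).mconv ((mconvPow μ n).mconv μ) = (mconvPow μ (m + n)).mconv μ
    rw [← aux_mconv_assoc, ih]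

lemma aux_tsum_key (f g h : ℕ → ENNReal) :
    (∑' n, ∑' m, f n * g m * h (n + m))
      = ∑' k, (∑ p ∈ Finset.HasAntidiagonal.antidiagonal k, f p.1 * g p.2) * h k := by
  rw [← ENNReal.tsum_prod (f := fun n m => f n * g m * h (n + m)),
    ← Finset.HasAntidiagonal.sigmaAntidiagonalEquivProd.tsum_eq
      (f := fun p : ℕ × ℕ => f p.1 * g p.2 * h (p.1 + p.2)),
    ENNReal.tsum_sigma']
  apply tsum_congr
  intro k
  rw [Finset.sum_mul, ← Finset.tsum_subtype]
  apply tsum_congr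
  rintro ⟨⟨i, j⟩, hp⟩
  rw [Finset.HasAntidiagonal.mem_antidiagonal] at hp
  simp [Finset.HasAntidiagonal.sigmaAntidiagonalEquivProd, hp]

lemma aux_coeff_sum (a b : ℝ) (k : ℕ) :
    (∑ p ∈ Finset.HasAntidiagonal.antidiagonal k,
      a ^ p.1 / p.1.factorial * (b ^ p.2 / p.2.factorial))
      = (a + b) ^ k / k.factorial := by
  rw [Finset.Nat.sum_antidiagonal_eq_sum_range_succ_mk, add_pow, Finset.sum_div]
  apply Finset.sum_congr rfl
  intro i hi
  rw [Finset.mem_range_succ_iff] at hi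
  rw [Nat.cast_choose ℝ hi]
  have h1 : (i.factorial : ℝ) ≠ 0 := Nat.cast_ne_zero.mpr i.factorial_ne_zero
  have h2 : ((k - i).factorial : ℝ) ≠ 0 := Nat.cast_ne_zero.mpr (k - i).factorial_ne_zero
  have h3 : (k.factorial : ℝ) ≠ 0 := Nat.cast_ne_zero.mpr k.factorial_ne_zero
  field_simp

lemma aux_coeff_sum' {a b : ℝ} (ha : 0 ≤ a) (hb : 0 ≤ b) (k : ℕ) :
    (∑ p ∈ Finset.HasAntidiagonal.antidiagonal k,
      ENNReal.ofReal (a ^ p.1 / p.1.factorial) * ENNReal.ofReal (b ^ p.2 / p.2.factorial))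
      = ENNReal.ofReal ((a + b) ^ k / k.factorial) := by
  rw [← aux_coeff_sum a b k,
    ENNReal.ofReal_sum_of_nonneg (fun p _ => by positivity)]
  apply Finset.sum_congr rfl
  intro p _
  rw [ENNReal.ofReal_mul (by positivity)]

lemma aux_convExp_add (μ : Measure M) [IsProbabilityMeasure μ] {a b : ℝ}
    (ha : 0 ≤ a) (hb : 0 ≤ b) :
    (convExp μ a).mconv (convExp μ b) = convExp μ (a + b) := by
  unfold convExp
  rw [aux_mconv_smul_left, aux_mconv_smul_right, aux_mconv_sum_left, smul_smul]
  have hc : ENNReal.ofReal (Real.exp (-a)) * ENNReal.ofReal (Real.exp (-b))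
      = ENNReal.ofReal (Real.exp (-(a + b))) := by
    rw [← ENNReal.ofReal_mul (Real.exp_nonneg _), ← Real.exp_add]
    ring_nf
  rw [hc]
  congr 1
  ext s hs
  simp only [Measure.sum_apply _ hs, Measure.smul_apply, smul_eq_mul]
  have : ∀ n : ℕ, ((ENNReal.ofReal (a ^ n / n.factorial) • mconvPow μ n).mconv
      (Measure.sum fun m => ENNReal.ofReal (b ^ m / m.factorial) • mconvPow μ m)) s
      = ∑' m, ENNReal.ofReal (a ^ n / n.factorial) * ENNReal.ofReal (b ^ m / m.factorial)
        * (mconvPow μ (n + m)) s := by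
    intro n
    rw [aux_mconv_sum_right, Measure.sum_apply _ hs]
    apply tsum_congr
    intro m
    rw [aux_mconv_smul_left, aux_mconv_smul_right, aux_mconvPow_add, smul_smul]
    simp [mul_assoc]
  calc (∑' n, ((ENNReal.ofReal (a ^ n / n.factorial) • mconvPow μ n).mconv
        (Measure.sum fun m => ENNReal.ofReal (b ^ m / m.factorial) • mconvPow μ m)) s)
      = ∑' n, ∑' m, ENNReal.ofReal (a ^ n / n.factorial)
          * ENNReal.ofReal (b ^ m / m.factorial) * (mconvPow μ (n + m)) s := by
        exact tsum_congr this
    _ = ∑' k, (∑ p ∈ Finset.HasAntidiagonal.antidiagonal k, ENNReal.ofReal (a ^ p.1 / p.1.factorial)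
          * ENNReal.ofReal (b ^ p.2 / p.2.factorial)) * (mconvPow μ k) s :=
        aux_tsum_key (fun n => ENNReal.ofReal (a ^ n / n.factorial))
          (fun m => ENNReal.ofReal (b ^ m / m.factorial)) (fun k => (mconvPow μ k) s)
    _ = ∑' k, ENNReal.ofReal ((a + b) ^ k / k.factorial) * (mconvPow μ k) s := by
        apply tsum_congr; intro k; rw [aux_coeff_sum' ha hb]

lemma aux_convExp_zero (μ : Measure M) [IsProbabilityMeasure μ] :
    convExp μ 0 = Measure.dirac 1 := by
  unfold convExp
  ext s hs
  simp only [Measure.smul_apply, Measure.sum_apply _ hs, smul_eq_mul]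
  rw [tsum_eq_single 0]
  · simp [mconvPow]
  · intro n hn
    simp [zero_pow hn, Measure.smul_apply]

lemma aux_convExp_prob (μ : Measure M) [IsProbabilityMeasure μ] {s : ℝ} (hs : 0 ≤ s) :
    IsProbabilityMeasure (convExp μ s) := by
  constructor
  unfold convExp
  rw [Measure.smul_apply, Measure.sum_apply _ MeasurableSet.univ]
  have h1 : ∀ n : ℕ, (ENNReal.ofReal (s ^ n / n.factorial) • mconvPow μ n) Set.univ
      = ENNReal.ofReal (s ^ n / n.factorial) := by
    intro n
    simp [measure_univ]
  simp_rw [h1]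
  rw [← ENNReal.ofReal_tsum_of_nonneg (fun n => by positivity)
    (Real.summable_pow_div_factorial s)]
  rw [smul_eq_mul, ← ENNReal.ofReal_mul (Real.exp_nonneg _)]
  have hsum : (∑' n : ℕ, s ^ n / (n.factorial : ℝ)) = Real.exp s := by
    rw [Real.exp_eq_exp_ℝ, NormedSpace.exp_eq_tsum_div]
  rw [hsum, ← Real.exp_add]
  simp

end Aux

theorem stmt13 {M : Type*} [CommMonoid M] [MeasurableSpace M] [MeasurableMul₂ M]
    (μ : Measure M) [IsProbabilityMeasure μ] (r : ℝ) (hr : 0 ≤ r) :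
    ∃ X : ℝ → Measure M,
      (∀ t ∈ Set.Icc (0 : ℝ) 1, IsProbabilityMeasure (X t)) ∧
      X 0 = Measure.dirac 1 ∧
      X 1 = convExp μ r ∧
      (∀ s t : ℝ, s ∈ Set.Icc (0 : ℝ) 1 → t ∈ Set.Icc (0 : ℝ) 1 →
        s + t ∈ Set.Icc (0 : ℝ) 1 → X (s + t) = Measure.mconv (X s) (X t)) ∧
      ∀ t ∈ Set.Icc (0 : ℝ) 1, X t = convExp μ (t * r) := by
  refine ⟨fun t => convExp μ (t * r), ?_, ?_, ?_, ?_, ?_⟩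
  · intro t ht
    exact aux_convExp_prob μ (mul_nonneg ht.1 hr)
  · show convExp μ (0 * r) = _
    rw [zero_mul]; exact aux_convExp_zero μ
  · show convExp μ (1 * r) = _
    rw [one_mul]
  · intro s t hs ht hst
    show convExp μ ((s + t) * r) = _
    rw [add_mul, ← aux_convExp_add μ (mul_nonneg hs.1 hr) (mul_nonneg ht.1 hr)]
  · intro t ht; rfl
end
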